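/- Under the standing assumptions (X geodesic, locally compact, semi-locally simply connected; α a geodesic circle and bottleneck loop; N a compact geodesically convex neighborhood of α in which α is the shortest non-contractible loop and in which every loop is freely homotopic to a k-fold concatenation of α for some k ∈ ℤ): if a triple of points in N has diameter less than |α|/2, then any two fillings of this triple in N are freely homotopic; consequently the winding number of such a triple is well defined. -/

import Mathlib

open Set Metric
open scoped ENNReal

noncomputable section

section Loops

/-- A loop in a space `X`: a continuous map from the circle `ℝ/ℤ`
(of circumference 1). -/
abbrev MLoop (X : Type*) [TopologicalSpace X] : Type _ := C(AddCircle (1 : ℝ), X)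

variable {X : Type*} [MetricSpace X]

/-- The length of a loop: its total variation over one period. -/
def loopLength (γ : MLoop X) : ℝ≥0∞ :=
  eVariationOn (fun t : ℝ => γ (t : AddCircle (1 : ℝ))) (Set.Icc 0 1)

/-- Two loops are freely homotopic through the set `U`. -/
def FreelyHomotopicIn (U : Set X) (β γ : MLoop X) : Prop :=
  ∃ H : ContinuousMap.Homotopy β γ, Set.range ⇑H ⊆ U

/-- Two loops are freely homotopic (in all of `X`). -/
def FreelyHomotopic (β γ : MLoop X) : Prop :=
  FreelyHomotopicIn Set.univ β γ

/-- The reversed loop `α⁻`. -/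
def loopReverse (γ : MLoop X) : MLoop X :=
  γ.comp ⟨fun t => -t, continuous_neg⟩

/-- The `k`-fold concatenation of a loop, realized as the composition with the
degree-`k` self-map of the circle (the constant loop for `k = 0`, and the
`|k|`-fold concatenation of the reverse for `k < 0`). -/
def loopPow (γ : MLoop X) (k : ℤ) : MLoop X :=
  γ.comp ⟨fun t => k • t, continuous_zsmul k⟩

/-- A loop is null-homotopic (contractible) in `U` if it is freely homotopic in `U`
to a constant loop. -/
def NullHomotopicIn (U : Set X) (γ : MLoop X) : Prop :=
  ∃ x : X, FreelyHomotopicIn U γ (ContinuousMap.const _ x)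

/-- `f` parametrizes a geodesic from `x` to `y` on the interval `[0, dist x y]`:
it is an isometric embedding of this interval sending `0 ↦ x`, `dist x y ↦ y`. -/
def IsGeodesicSegment (f : ℝ → X) (x y : X) : Prop :=
  f 0 = x ∧ f (dist x y) = y ∧
    ∀ s ∈ Set.Icc (0 : ℝ) (dist x y), ∀ t ∈ Set.Icc (0 : ℝ) (dist x y),
      dist (f s) (f t) = |s - t|

/-- A metric space is geodesic if any two points are joined by a geodesic. -/
def GeodesicSpace (X : Type*) [MetricSpace X] : Prop :=
  ∀ x y : X, ∃ f : ℝ → X, IsGeodesicSegment f x y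

/-- `X` is semi-locally simply connected: every point has a ball in which
every loop is null-homotopic in `X`. -/
def SemiLocallySimplyConnected (X : Type*) [MetricSpace X] : Prop :=
  ∀ x : X, ∃ δ > (0 : ℝ), ∀ γ : MLoop X, Set.range ⇑γ ⊆ Metric.ball x δ →
    NullHomotopicIn Set.univ γ

/-- `α` is a geodesic circle of circumference `c` in `X`: as a map from the circle
of circumference `1` it rescales the (geodesic) circle distance by the factor `c`;
equivalently it corresponds to an isometric embedding of `S¹_c` into `X`. -/
def IsGeodesicCircle (α : MLoop X) (c : ℝ) : Prop :=
  0 < c ∧ ∀ s t : AddCircle (1 : ℝ), dist (α s) (α t) = c * dist s t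

/-- A bottleneck loop: a loop of finite length that is a shortest representative
of its free (unoriented) homotopy class within some neighbourhood of its image. -/
def IsBottleneckLoop (α : MLoop X) : Prop :=
  loopLength α ≠ ⊤ ∧
  ∃ U : Set X, IsOpen U ∧ Set.range ⇑α ⊆ U ∧
    ∀ β : MLoop X, Set.range ⇑β ⊆ U →
      (FreelyHomotopicIn U β α ∨ FreelyHomotopicIn U β (loopReverse α)) →
      loopLength α ≤ loopLength β

/-- A set is geodesically convex if every geodesic between its points lies in it. -/
def GeodesicallyConvex (N : Set X) : Prop :=
  ∀ x ∈ N, ∀ y ∈ N, ∀ f : ℝ → X, IsGeodesicSegment f x y →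
    ∀ t ∈ Set.Icc (0 : ℝ) (dist x y), f t ∈ N

/-- The perimeter of a triple: the length of any of its fillings. -/
def triplePerim (x₁ x₂ x₃ : X) : ℝ := dist x₁ x₂ + dist x₂ x₃ + dist x₃ x₁

/-- The diameter of a triple of points. -/
def tripleDiam (x₁ x₂ x₃ : X) : ℝ := max (dist x₁ x₂) (max (dist x₂ x₃) (dist x₃ x₁))

/-- The diameter of a quadruple of points. -/
def quadDiam (x₁ x₂ x₃ x₄ : X) : ℝ :=
  max (tripleDiam x₁ x₂ x₃) (max (dist x₁ x₄) (max (dist x₂ x₄) (dist x₃ x₄)))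

/-- `f : ℝ → X` traverses a filling of the (oriented) triple `(x₁, x₂, x₃)`:
it concatenates geodesics from `x₁` to `x₂`, from `x₂` to `x₃` and from `x₃` to
`x₁`, parametrized by arc length on `[0, triplePerim x₁ x₂ x₃]`. -/
def IsFillingFun (x₁ x₂ x₃ : X) (f : ℝ → X) : Prop :=
  f 0 = x₁ ∧ f (dist x₁ x₂) = x₂ ∧ f (dist x₁ x₂ + dist x₂ x₃) = x₃ ∧
  f (triplePerim x₁ x₂ x₃) = x₁ ∧
  (∀ s ∈ Set.Icc (0 : ℝ) (dist x₁ x₂), ∀ t ∈ Set.Icc (0 : ℝ) (dist x₁ x₂),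
    dist (f s) (f t) = |s - t|) ∧
  (∀ s ∈ Set.Icc (dist x₁ x₂) (dist x₁ x₂ + dist x₂ x₃),
    ∀ t ∈ Set.Icc (dist x₁ x₂) (dist x₁ x₂ + dist x₂ x₃), dist (f s) (f t) = |s - t|) ∧
  (∀ s ∈ Set.Icc (dist x₁ x₂ + dist x₂ x₃) (triplePerim x₁ x₂ x₃),
    ∀ t ∈ Set.Icc (dist x₁ x₂ + dist x₂ x₃) (triplePerim x₁ x₂ x₃),
    dist (f s) (f t) = |s - t|)

/-- The loop `L` is a filling of the oriented triple `(x₁, x₂, x₃)`. -/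
def IsFilling (x₁ x₂ x₃ : X) (L : MLoop X) : Prop :=
  ∃ f : ℝ → X, IsFillingFun x₁ x₂ x₃ f ∧
    ∀ t ∈ Set.Icc (0 : ℝ) 1, L (t : AddCircle (1 : ℝ)) = f (triplePerim x₁ x₂ x₃ * t)

/-- A triple of points of `N` is circumventing (w.r.t. the loop `α`) if each of its
fillings lying in `N` is freely homotopic to `α` or to `α⁻`. -/
def Circumventing (N : Set X) (α : MLoop X) (x₁ x₂ x₃ : X) : Prop :=
  x₁ ∈ N ∧ x₂ ∈ N ∧ x₃ ∈ N ∧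
  ∀ L : MLoop X, IsFilling x₁ x₂ x₃ L → Set.range ⇑L ⊆ N →
    (FreelyHomotopic L α ∨ FreelyHomotopic L (loopReverse α))

/-- The (oriented) triple `(x₁, x₂, x₃)` has winding number `k` with respect to the
oriented loop `α`: some filling of it is freely homotopic to the `k`-fold
concatenation of `α`. -/
def HasTripleWinding (α : MLoop X) (x₁ x₂ x₃ : X) (k : ℤ) : Prop :=
  ∃ L : MLoop X, IsFilling x₁ x₂ x₃ L ∧ FreelyHomotopic L (loopPow α k)

end Loops
section Aux

open scoped unitInterval

universe u
variable {X : Type u} [MetricSpace X]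

attribute [local instance] Path.Homotopic.setoid

lemma addCircle_exists_rep (z : AddCircle (1 : ℝ)) :
    ∃ t : ℝ, t ∈ Set.Ico (0:ℝ) 1 ∧ z = (t : AddCircle (1:ℝ)) := by
  refine ⟨(AddCircle.equivIco 1 0 z : ℝ), by simpa using (AddCircle.equivIco 1 0 z).2, ?_⟩
  exact ((AddCircle.equivIco 1 0).symm_apply_apply z).symm

/-- The loop associated to a closed path. -/
def pathToLoop {v : X} (r : Path v v) : MLoop X :=
  ⟨AddCircle.liftIco 1 0 r.extend,
   AddCircle.liftIco_zero_continuous (by simp) r.continuous_extend.continuousOn⟩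

lemma pathToLoop_def {v : X} (r : Path v v) (z : AddCircle (1:ℝ)) :
    pathToLoop r z = AddCircle.liftIco 1 0 r.extend z := rfl

lemma pathToLoop_coe {v : X} (r : Path v v) {t : ℝ} (ht : t ∈ Set.Ico (0:ℝ) 1) :
    pathToLoop r (t : AddCircle (1:ℝ)) = r.extend t := by
  rw [pathToLoop_def]
  exact AddCircle.liftIco_coe_apply (by simpa using ht)

lemma pathToLoop_coe' {v : X} (r : Path v v) {t : ℝ} (ht : t ∈ Set.Icc (0:ℝ) 1) :
    pathToLoop r (t : AddCircle (1:ℝ)) = r.extend t := by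
  rcases eq_or_lt_of_le ht.2 with h | h
  · subst h
    have h1 : ((1:ℝ) : AddCircle (1:ℝ)) = ((0:ℝ) : AddCircle (1:ℝ)) := by
      simp [AddCircle.coe_period]
    rw [h1, pathToLoop_coe r (by norm_num)]
    simp
  · exact pathToLoop_coe r ⟨ht.1, h⟩

lemma pathToLoop_apply {v : X} (r : Path v v) (t : I) :
    pathToLoop r ((t : ℝ) : AddCircle (1:ℝ)) = r t := by
  rw [pathToLoop_coe' r t.2, Path.extend_apply r t.2]

lemma range_pathToLoop {v : X} (r : Path v v) :
    Set.range ⇑(pathToLoop r) ⊆ Set.range ⇑r := by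
  rintro - ⟨z, rfl⟩
  obtain ⟨t, ht, rfl⟩ := addCircle_exists_rep z
  rw [pathToLoop_coe r ht, ← Path.extend_range]
  exact Set.mem_range_self t

end Aux
section Aux2

open scoped unitInterval

universe u
variable {X : Type u} [MetricSpace X]

lemma loopLength_pathToLoop_le {v : X} (r : Path v v) {K : ℝ}
    (hr : ∀ s t : I, dist (r s) (r t) ≤ K * |(s:ℝ) - (t:ℝ)|) :
    loopLength (pathToLoop r) ≤ ENNReal.ofReal K := by
  have heq : Set.EqOn (fun t : ℝ => pathToLoop r (t : AddCircle (1:ℝ))) r.extend (Set.Icc 0 1) :=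
    fun t ht => pathToLoop_coe' r ht
  rw [loopLength, eVariationOn.eq_of_eqOn heq]
  have hlip : LipschitzOnWith (Real.toNNReal K) r.extend (Set.Icc 0 1) := by
    rw [lipschitzOnWith_iff_dist_le_mul]
    intro s hs t ht
    have := hr ⟨s, hs⟩ ⟨t, ht⟩
    rw [Path.extend_apply r hs, Path.extend_apply r ht]
    calc dist (r ⟨s, hs⟩) (r ⟨t, ht⟩) ≤ K * |s - t| := this
      _ ≤ Real.toNNReal K * |s - t| :=
          mul_le_mul_of_nonneg_right (Real.le_coe_toNNReal K) (abs_nonneg _)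
      _ = Real.toNNReal K * dist s t := by rw [Real.dist_eq]
  have hvar : eVariationOn r.extend (Set.Icc 0 1) ≤ (Real.toNNReal K : ℝ≥0∞) * eVariationOn (id : ℝ → ℝ) (Set.Icc 0 1) :=
    hlip.comp_eVariationOn_le (fun x hx => hx)
  have hid : eVariationOn (id : ℝ → ℝ) (Set.Icc 0 1) ≤ ENNReal.ofReal 1 := by
    have := MonotoneOn.eVariationOn_le (f := (id : ℝ → ℝ)) (s := Set.Icc (0:ℝ) 1)
      (monotoneOn_id) (a := 0) (b := 1) (by norm_num) (by norm_num)
    simpa using this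
  calc eVariationOn r.extend (Set.Icc 0 1)
      ≤ (Real.toNNReal K : ℝ≥0∞) * eVariationOn (id : ℝ → ℝ) (Set.Icc 0 1) := hvar
    _ ≤ (Real.toNNReal K : ℝ≥0∞) * ENNReal.ofReal 1 := by gcongr
    _ = ENNReal.ofReal K := by
        rw [ENNReal.ofReal_one, mul_one, ENNReal.ofReal]

end Aux2
section Aux3

open scoped unitInterval FundamentalGroupoid
open CategoryTheory FundamentalGroupoid

universe u
variable {X : Type u} [MetricSpace X]

attribute [local instance] Path.Homotopic.setoid

lemma homotopic_refl_of_eq {Z : Type*} [TopologicalSpace Z] {a v : Z} (h : a = v) (q : Path a a) (r : Path v v)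
    (hfun : ∀ t : unitInterval, q t = r t) (hq : Path.Homotopic q (Path.refl a)) :
    Path.Homotopic r (Path.refl v) := by
  subst h
  have : q = r := by
    ext t
    exact hfun t
  rwa [this] at hq

lemma nullhomotopic_pathToLoop {v : X} (r : Path v v)
    (h : NullHomotopicIn Set.univ (pathToLoop r)) :
    Path.Homotopic r (Path.refl v) := by
  obtain ⟨x, H, -⟩ := h
  let A : TopCat := TopCat.of (ULift.{u} (AddCircle (1:ℝ)))
  let Y : TopCat := TopCat.of X
  let β' : C(A, Y) := ⟨fun z => pathToLoop r z.down,
    (pathToLoop r).continuous.comp continuous_uliftDown⟩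
  let cst : C(A, Y) := ContinuousMap.const A x
  let H' : ContinuousMap.Homotopy β' cst :=
  { toFun := fun sz => H (sz.1, sz.2.down)
    continuous_toFun := H.continuous.comp
      (continuous_fst.prodMk (continuous_uliftDown.comp continuous_snd))
    map_zero_left := fun z => H.apply_zero _
    map_one_left := fun z => H.apply_one _ }
  let u' : Path (ULift.up (0 : AddCircle (1:ℝ)) : A) (ULift.up (0 : AddCircle (1:ℝ))) :=
  { toFun := fun t => ULift.up (((t : ℝ) : AddCircle (1:ℝ)))
    continuous_toFun := by
      apply Continuous.comp continuous_uliftUp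
      exact (AddCircle.continuous_mk' (1:ℝ)).comp continuous_subtype_val
    source' := by norm_num
    target' := by
      apply congrArg ULift.up
      norm_num }
  have h1 := (H'.eq_diag_path (⟦u'⟧ : fromTop (X := A) (ULift.up 0) ⟶ fromTop (ULift.up 0))).1
  have h2 := (H'.eq_diag_path (⟦u'⟧ : fromTop (X := A) (ULift.up 0) ⟶ fromTop (ULift.up 0))).2
  rw [← h2] at h1
  have hconst : (πₘ (TopCat.ofHom cst)).map (⟦u'⟧ : fromTop (X := A) (ULift.up 0) ⟶ fromTop (ULift.up 0))
      = 𝟙 (fromTop (X := Y) x) := by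
    change (⟦u'.map cst.continuous⟧ : Path.Homotopic.Quotient _ _) = ⟦Path.refl x⟧
    apply congrArg (Quotient.mk _)
    ext t
    rfl
  rw [hconst] at h1
  erw [Category.comp_id] at h1
  -- h1 : (πₘ β').map ⟦u'⟧ ≫ ⟦H'.evalAt (up 0)⟧ = ⟦H'.evalAt (up 0)⟧
  have key : (πₘ (TopCat.ofHom β')).map (⟦u'⟧ : fromTop (X := A) (ULift.up 0) ⟶ fromTop (ULift.up 0))
      = 𝟙 _ := by
    have h1' : (πₘ (TopCat.ofHom β')).map (⟦u'⟧ : fromTop (X := A) (ULift.up 0) ⟶ fromTop (ULift.up 0)) ≫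
        (⟦H'.evalAt (ULift.up 0)⟧ : fromTop (X := Y) (β' (ULift.up 0)) ⟶ fromTop x) =
        𝟙 _ ≫ (⟦H'.evalAt (ULift.up 0)⟧ : fromTop (X := Y) (β' (ULift.up 0)) ⟶ fromTop x) := by
      erw [Category.id_comp]
      exact h1
    exact (@cancel_mono _ _ _ _ _ _ (@IsIso.mono_of_iso _ _ _ _ _ (IsIso.of_groupoid _)) _ _).mp h1'
  -- translate: ⟦u'.map β'.continuous⟧ = ⟦refl (β' (up 0))⟧
  have key2 : Path.Homotopic (u'.map β'.continuous) (Path.refl (β' (ULift.up 0))) := by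
    change (⟦u'.map β'.continuous⟧ : Path.Homotopic.Quotient _ _) = ⟦Path.refl (β' (ULift.up 0))⟧ at key
    exact Quotient.exact key
  have hv : β' (ULift.up (0 : AddCircle (1:ℝ))) = v := by
    show pathToLoop r ((0:AddCircle (1:ℝ))) = v
    have : ((0:ℝ) : AddCircle (1:ℝ)) = (0 : AddCircle (1:ℝ)) := rfl
    rw [← this, pathToLoop_coe r (by norm_num)]
    simp
  have hfun : ∀ t : I, (u'.map β'.continuous) t = r t := by
    intro t
    show pathToLoop r (((t:ℝ) : AddCircle (1:ℝ))) = r t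
    exact pathToLoop_apply r t
  exact homotopic_refl_of_eq hv _ r hfun key2

end Aux3
section Aux4

open scoped unitInterval

universe u
variable {X : Type u} [MetricSpace X]

lemma geodesic_paths_homotopic {c : ℝ} (hc : 0 < c) (N : Set X)
    (hshort : ∀ β : MLoop X, Set.range ⇑β ⊆ N → loopLength β < ENNReal.ofReal c →
      NullHomotopicIn Set.univ β)
    {v w : X} (p q : Path v w)
    (hd : dist v w < c / 2)
    (hp : ∀ s t : I, dist (p s) (p t) ≤ dist v w * |(s:ℝ) - (t:ℝ)|)
    (hq : ∀ s t : I, dist (q s) (q t) ≤ dist v w * |(s:ℝ) - (t:ℝ)|)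
    (hpN : Set.range ⇑p ⊆ N) (hqN : Set.range ⇑q ⊆ N) :
    Path.Homotopic p q := by
  set d := dist v w with hdd
  have hd0 : 0 ≤ d := dist_nonneg
  set r := p.trans q.symm with hr
  -- pointwise description
  have hq' : ∀ s t : I, dist (q.symm s) (q.symm t) ≤ d * |(s:ℝ) - (t:ℝ)| := by
    intro s t
    show dist (q (σ s)) (q (σ t)) ≤ d * |(s:ℝ) - (t:ℝ)|
    calc dist (q (σ s)) (q (σ t)) ≤ d * |((σ s : ℝ)) - ((σ t : ℝ))| := hq _ _
      _ = d * |(s:ℝ) - (t:ℝ)| := by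
          rw [unitInterval.coe_symm_eq, unitInterval.coe_symm_eq]
          rw [show (1 - (s:ℝ)) - (1 - (t:ℝ)) = -((s:ℝ) - (t:ℝ)) by ring, abs_neg]
  -- distance to the midpoint value w
  have hone : ((1:I):ℝ) = 1 := rfl
  have hzero : ((0:I):ℝ) = 0 := rfl
  have hmid1 : ∀ u : I, (u:ℝ) ≤ 1/2 → dist (r u) w ≤ 2 * d * (1/2 - (u:ℝ)) := by
    intro u hu
    have h2u : 2*(u:ℝ) ∈ I := (unitInterval.mul_pos_mem_iff zero_lt_two).2 ⟨u.2.1, hu⟩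
    rw [Path.trans_apply, dif_pos hu]
    calc dist (p ⟨2*(u:ℝ), h2u⟩) w = dist (p ⟨2*(u:ℝ), h2u⟩) (p 1) := by rw [Path.target]
      _ ≤ d * |(2*(u:ℝ)) - ((1:I):ℝ)| := hp _ _
      _ = 2 * d * (1/2 - (u:ℝ)) := by
          rw [hone, abs_of_nonpos (by linarith)]
          ring
  have hmid2 : ∀ u : I, 1/2 ≤ (u:ℝ) → dist (r u) w ≤ 2 * d * ((u:ℝ) - 1/2) := by
    intro u hu
    rcases eq_or_lt_of_le hu with h | h
    · have : dist (r u) w ≤ 2 * d * (1/2 - (u:ℝ)) := hmid1 u h.symm.le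
      calc dist (r u) w ≤ 2 * d * (1/2 - (u:ℝ)) := this
        _ = 2 * d * ((u:ℝ) - 1/2) := by rw [← h]
    · have h2u : 2*(u:ℝ) - 1 ∈ I := unitInterval.two_mul_sub_one_mem_iff.2 ⟨h.le, u.2.2⟩
      rw [Path.trans_apply, dif_neg (not_le.mpr h)]
      calc dist (q.symm ⟨2*(u:ℝ) - 1, h2u⟩) w
          = dist (q.symm ⟨2*(u:ℝ) - 1, h2u⟩) (q.symm 0) := by rw [q.symm.source]
        _ ≤ d * |(2*(u:ℝ) - 1) - ((0:I):ℝ)| := hq' _ _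
        _ = 2 * d * ((u:ℝ) - 1/2) := by
            rw [hzero, abs_of_nonneg (by linarith)]
            ring
  have hlip : ∀ s t : I, dist (r s) (r t) ≤ (2*d) * |(s:ℝ) - (t:ℝ)| := by
    have main : ∀ s t : I, (s:ℝ) ≤ (t:ℝ) → dist (r s) (r t) ≤ (2*d) * |(s:ℝ) - (t:ℝ)| := by
      intro s t hst
      rcases le_or_gt (t:ℝ) (1/2) with ht | ht
      · -- both in first half
        have hs : (s:ℝ) ≤ 1/2 := le_trans hst ht
        rw [Path.trans_apply, Path.trans_apply, dif_pos hs, dif_pos ht]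
        calc dist (p _) (p _) ≤ d * |(2*(s:ℝ)) - (2*(t:ℝ))| := hp _ _
          _ = (2*d) * |(s:ℝ) - (t:ℝ)| := by
              rw [show (2*(s:ℝ)) - (2*(t:ℝ)) = 2*((s:ℝ) - (t:ℝ)) by ring, abs_mul]
              rw [abs_of_nonneg (by norm_num : (0:ℝ) ≤ 2)]
              ring
      · rcases le_or_gt (s:ℝ) (1/2) with hs | hs
        · -- mixed
          calc dist (r s) (r t) ≤ dist (r s) w + dist w (r t) := dist_triangle _ _ _
            _ ≤ 2 * d * (1/2 - (s:ℝ)) + 2 * d * ((t:ℝ) - 1/2) := by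
                refine add_le_add (hmid1 s hs) ?_
                rw [dist_comm]
                exact hmid2 t ht.le
            _ = (2*d) * ((t:ℝ) - (s:ℝ)) := by ring
            _ = (2*d) * |(s:ℝ) - (t:ℝ)| := by
                rw [abs_of_nonpos (by linarith), neg_sub]
        · -- both in second half
          rw [Path.trans_apply, Path.trans_apply, dif_neg (not_le.mpr hs),
            dif_neg (not_le.mpr (lt_of_le_of_lt (le_of_eq rfl) (lt_of_lt_of_le hs hst)))]
          calc dist (q.symm _) (q.symm _) ≤ d * |(2*(s:ℝ) - 1) - (2*(t:ℝ) - 1)| := hq' _ _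
            _ = (2*d) * |(s:ℝ) - (t:ℝ)| := by
                rw [show (2*(s:ℝ) - 1) - (2*(t:ℝ) - 1) = 2*((s:ℝ) - (t:ℝ)) by ring, abs_mul]
                rw [abs_of_nonneg (by norm_num : (0:ℝ) ≤ 2)]
                ring
    intro s t
    rcases le_total (s:ℝ) (t:ℝ) with h | h
    · exact main s t h
    · rw [dist_comm, abs_sub_comm]
      exact main t s h
  -- the bigon loop is short and lies in N
  have hlen : loopLength (pathToLoop r) < ENNReal.ofReal c := by
    refine lt_of_le_of_lt (loopLength_pathToLoop_le r hlip) ?_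
    rw [ENNReal.ofReal_lt_ofReal_iff hc]
    linarith
  have hrange : Set.range ⇑(pathToLoop r) ⊆ N := by
    refine (range_pathToLoop r).trans ?_
    rw [hr, Path.trans_range, Path.symm_range]
    exact Set.union_subset hpN hqN
  have hnull := hshort (pathToLoop r) hrange hlen
  have h2 : Path.Homotopic r (Path.refl v) := nullhomotopic_pathToLoop r hnull
  -- conclude p ≃ q
  have step1 : Path.Homotopic p (p.trans (Path.refl w)) := ⟨(Path.Homotopy.transRefl p).symm⟩
  have step2 : Path.Homotopic (p.trans (Path.refl w)) (p.trans (q.symm.trans q)) :=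
    Path.Homotopic.hcomp (Path.Homotopic.refl p) ⟨Path.Homotopy.reflSymmTrans q⟩
  have step3 : Path.Homotopic (p.trans (q.symm.trans q)) ((p.trans q.symm).trans q) :=
    ⟨(Path.Homotopy.transAssoc p q.symm q).symm⟩
  have step4 : Path.Homotopic ((p.trans q.symm).trans q) ((Path.refl v).trans q) :=
    Path.Homotopic.hcomp h2 (Path.Homotopic.refl q)
  have step5 : Path.Homotopic ((Path.refl v).trans q) q := ⟨Path.Homotopy.reflTrans q⟩
  exact ((((step1.trans step2).trans step3).trans step4).trans step5)

end Aux4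
section Aux5

open scoped unitInterval

universe u
variable {X : Type u} [MetricSpace X]

lemma exists_sidePath {v w : X} (f : ℝ → X) (a ℓ : ℝ) (hℓ : 0 ≤ ℓ)
    (hiso : ∀ s ∈ Set.Icc a (a+ℓ), ∀ t ∈ Set.Icc a (a+ℓ), dist (f s) (f t) = |s - t|)
    (hv : f a = v) (hw : f (a+ℓ) = w) :
    ∃ p : Path v w, (∀ t : I, p t = f (a + ℓ * t)) ∧
      (∀ s t : I, dist (p s) (p t) = ℓ * |(s:ℝ) - (t:ℝ)|) := by
  have hmem : ∀ t : I, a + ℓ * t ∈ Set.Icc a (a+ℓ) := by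
    intro t
    constructor
    · nlinarith [t.2.1, t.2.2]
    · nlinarith [t.2.1, t.2.2]
  have hdist : ∀ s t : I, dist (f (a + ℓ * s)) (f (a + ℓ * t)) = ℓ * |(s:ℝ) - (t:ℝ)| := by
    intro s t
    rw [hiso _ (hmem s) _ (hmem t)]
    rw [show (a + ℓ * s) - (a + ℓ * t) = ℓ * ((s:ℝ) - (t:ℝ)) by ring, abs_mul,
      abs_of_nonneg hℓ]
  have hcont : Continuous (fun t : I => f (a + ℓ * t)) := by
    apply LipschitzWith.continuous (K := Real.toNNReal ℓ)
    rw [lipschitzWith_iff_dist_le_mul]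
    intro s t
    rw [hdist s t, Subtype.dist_eq, Real.dist_eq]
    exact mul_le_mul_of_nonneg_right (Real.le_coe_toNNReal ℓ) (abs_nonneg _)
  refine ⟨{ toFun := fun t => f (a + ℓ * t)
            continuous_toFun := hcont
            source' := by simpa using hv
            target' := by
              show f (a + ℓ * ((1:I):ℝ)) = w
              have h1 : ((1:I):ℝ) = 1 := rfl
              rw [h1, mul_one]
              exact hw }, fun t => rfl, hdist⟩

end Aux5
section Aux6

open scoped unitInterval

universe u
variable {X : Type u} [MetricSpace X]

lemma key_lemma {c : ℝ} (hc : 0 < c) (N : Set X)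
    (hshort : ∀ β : MLoop X, Set.range ⇑β ⊆ N → loopLength β < ENNReal.ofReal c →
      NullHomotopicIn Set.univ β)
    (x₁ x₂ x₃ : X) (hdiam : tripleDiam x₁ x₂ x₃ < c / 2)
    (L₁ L₂ : MLoop X) (hF₁ : IsFilling x₁ x₂ x₃ L₁) (hN₁ : Set.range ⇑L₁ ⊆ N)
    (hF₂ : IsFilling x₁ x₂ x₃ L₂) (hN₂ : Set.range ⇑L₂ ⊆ N) :
    FreelyHomotopic L₁ L₂ := by
  obtain ⟨f₁, hf₁, hL₁⟩ := hF₁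
  obtain ⟨f₂, hf₂, hL₂⟩ := hF₂
  set d₁ := dist x₁ x₂ with hd₁
  set d₂ := dist x₂ x₃ with hd₂
  set d₃ := dist x₃ x₁ with hd₃
  have hP : triplePerim x₁ x₂ x₃ = d₁ + d₂ + d₃ := rfl
  set P := triplePerim x₁ x₂ x₃ with hPdef
  have h10 : 0 ≤ d₁ := dist_nonneg
  have h20 : 0 ≤ d₂ := dist_nonneg
  have h30 : 0 ≤ d₃ := dist_nonneg
  have hP0 : 0 ≤ P := by rw [hP]; linarith
  rcases eq_or_lt_of_le hP0 with hP0' | hPpos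
  · -- degenerate case : the triple perimeter is zero, both loops are constant
    have hd10 : d₁ = 0 := by rw [hP] at hP0'; linarith
    have heq : L₁ = L₂ := by
      ext z
      obtain ⟨t, ht, rfl⟩ := addCircle_exists_rep z
      rw [hL₁ t ⟨ht.1, ht.2.le⟩, hL₂ t ⟨ht.1, ht.2.le⟩, ← hP0', zero_mul,
        hf₁.1, hf₂.1]
    rw [heq]
    exact ⟨ContinuousMap.Homotopy.refl L₂, Set.subset_univ _⟩
  · -- main case
    -- the three sides, as paths, for each filling
    obtain ⟨p₁, hp₁, hp₁d⟩ := exists_sidePath f₁ 0 d₁ h10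
      (by simpa using hf₁.2.2.2.2.1) (by simpa using hf₁.1) (by simpa using hf₁.2.1)
    obtain ⟨p₂, hp₂, hp₂d⟩ := exists_sidePath f₁ d₁ d₂ h20
      hf₁.2.2.2.2.2.1 hf₁.2.1 hf₁.2.2.1
    obtain ⟨p₃, hp₃, hp₃d⟩ := exists_sidePath f₁ (d₁ + d₂) d₃ h30
      hf₁.2.2.2.2.2.2 hf₁.2.2.1 hf₁.2.2.2.1
    obtain ⟨q₁, hq₁, hq₁d⟩ := exists_sidePath f₂ 0 d₁ h10
      (by simpa using hf₂.2.2.2.2.1) (by simpa using hf₂.1) (by simpa using hf₂.2.1)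
    obtain ⟨q₂, hq₂, hq₂d⟩ := exists_sidePath f₂ d₁ d₂ h20
      hf₂.2.2.2.2.2.1 hf₂.2.1 hf₂.2.2.1
    obtain ⟨q₃, hq₃, hq₃d⟩ := exists_sidePath f₂ (d₁ + d₂) d₃ h30
      hf₂.2.2.2.2.2.2 hf₂.2.2.1 hf₂.2.2.2.1
    -- the values of f₁, f₂ on [0, P] lie in N
    have hfm₁ : ∀ u ∈ Set.Icc (0:ℝ) P, f₁ u ∈ N := by
      intro u hu
      have h1 : u / P ∈ Set.Icc (0:ℝ) 1 := by
        constructor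
        · exact div_nonneg hu.1 hP0
        · rw [div_le_one hPpos]; exact hu.2
      have := hL₁ (u/P) h1
      rw [mul_div_cancel₀ u hPpos.ne'] at this
      rw [← this]
      exact hN₁ (Set.mem_range_self _)
    have hfm₂ : ∀ u ∈ Set.Icc (0:ℝ) P, f₂ u ∈ N := by
      intro u hu
      have h1 : u / P ∈ Set.Icc (0:ℝ) 1 := by
        constructor
        · exact div_nonneg hu.1 hP0
        · rw [div_le_one hPpos]; exact hu.2
      have := hL₂ (u/P) h1
      rw [mul_div_cancel₀ u hPpos.ne'] at this
      rw [← this]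
      exact hN₂ (Set.mem_range_self _)
    have hmem1 : ∀ (a ℓ : ℝ), 0 ≤ a → 0 ≤ ℓ → a + ℓ ≤ P → ∀ t : I, a + ℓ * (t:ℝ) ∈ Set.Icc (0:ℝ) P := by
      intro a ℓ ha hℓ haℓ t
      constructor
      · nlinarith [t.2.1, t.2.2]
      · nlinarith [t.2.1, t.2.2]
    -- diameters
    have hdm1 : d₁ < c/2 := lt_of_le_of_lt (le_max_left _ _) hdiam
    have hdm2 : d₂ < c/2 :=
      lt_of_le_of_lt (le_trans (le_max_left _ _) (le_max_right _ _)) hdiam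
    have hdm3 : d₃ < c/2 :=
      lt_of_le_of_lt (le_trans (le_max_right _ _) (le_max_right _ _)) hdiam
    -- homotopies between corresponding sides
    have hom1 : Path.Homotopic p₁ q₁ := by
      apply geodesic_paths_homotopic hc N hshort p₁ q₁ hdm1
      · intro s t; rw [hp₁d s t]
      · intro s t; rw [hq₁d s t]
      · rintro - ⟨t, rfl⟩
        rw [hp₁ t]
        exact hfm₁ _ (by simpa using hmem1 0 d₁ le_rfl h10 (by rw [hP]; linarith) t)
      · rintro - ⟨t, rfl⟩
        rw [hq₁ t]
        exact hfm₂ _ (by simpa using hmem1 0 d₁ le_rfl h10 (by rw [hP]; linarith) t)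
    have hom2 : Path.Homotopic p₂ q₂ := by
      apply geodesic_paths_homotopic hc N hshort p₂ q₂ hdm2
      · intro s t; rw [hp₂d s t]
      · intro s t; rw [hq₂d s t]
      · rintro - ⟨t, rfl⟩
        rw [hp₂ t]
        exact hfm₁ _ (hmem1 d₁ d₂ h10 h20 (by rw [hP]; linarith) t)
      · rintro - ⟨t, rfl⟩
        rw [hq₂ t]
        exact hfm₂ _ (hmem1 d₁ d₂ h10 h20 (by rw [hP]; linarith) t)
    have hom3 : Path.Homotopic p₃ q₃ := by
      apply geodesic_paths_homotopic hc N hshort p₃ q₃ hdm3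
      · intro s t; rw [hp₃d s t]
      · intro s t; rw [hq₃d s t]
      · rintro - ⟨t, rfl⟩
        rw [hp₃ t]
        exact hfm₁ _ (hmem1 (d₁+d₂) d₃ (by linarith) h30 (by rw [hP]) t)
      · rintro - ⟨t, rfl⟩
        rw [hq₃ t]
        exact hfm₂ _ (hmem1 (d₁+d₂) d₃ (by linarith) h30 (by rw [hP]) t)
    obtain ⟨G₁⟩ := hom1
    obtain ⟨G₂⟩ := hom2
    obtain ⟨G₃⟩ := hom3
    classical
    -- basic facts about projIcc
    have hproj0 : Set.projIcc (0:ℝ) 1 zero_le_one (0:ℝ) = 0 := by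
      apply Subtype.ext
      simp [Set.projIcc]
    have hproj1 : Set.projIcc (0:ℝ) 1 zero_le_one (1:ℝ) = 1 := by
      apply Subtype.ext
      simp [Set.projIcc]
    have hprojmem : ∀ {x : ℝ}, 0 ≤ x → x ≤ 1 →
        ((Set.projIcc (0:ℝ) 1 zero_le_one x : I) : ℝ) = x := by
      intro x h1 h2
      show max 0 (min 1 x) = x
      rw [min_eq_right h2, max_eq_right h1]
    -- degenerate-side equalities
    have hx12 : d₁ = 0 → x₁ = x₂ := fun h => by rwa [hd₁, dist_eq_zero] at h
    have hx23 : d₂ = 0 → x₂ = x₃ := fun h => by rwa [hd₂, dist_eq_zero] at h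
    have hx31 : d₃ = 0 → x₃ = x₁ := fun h => by rwa [hd₃, dist_eq_zero] at h
    -- the glued homotopy as a function on ℝ × I
    set Φ : ℝ → I → X := fun u s =>
      if P * u ≤ d₁ then G₁ (s, Set.projIcc 0 1 zero_le_one ((P * u) / d₁))
      else if P * u ≤ d₁ + d₂ then
        G₂ (s, Set.projIcc 0 1 zero_le_one ((P * u - d₁) / d₂))
      else G₃ (s, Set.projIcc 0 1 zero_le_one ((P * u - (d₁ + d₂)) / d₃)) with hΦ
    have hcont1 : Continuous (fun z : ℝ × I =>
        G₁ (z.2, Set.projIcc 0 1 zero_le_one ((P * z.1) / d₁))) :=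
      G₁.continuous.comp (continuous_snd.prodMk (continuous_projIcc.comp
        ((continuous_const.mul continuous_fst).div_const d₁)))
    have hcont2 : Continuous (fun z : ℝ × I =>
        G₂ (z.2, Set.projIcc 0 1 zero_le_one ((P * z.1 - d₁) / d₂))) :=
      G₂.continuous.comp (continuous_snd.prodMk (continuous_projIcc.comp
        (((continuous_const.mul continuous_fst).sub continuous_const).div_const d₂)))
    have hcont3 : Continuous (fun z : ℝ × I =>
        G₃ (z.2, Set.projIcc 0 1 zero_le_one ((P * z.1 - (d₁ + d₂)) / d₃))) :=
      G₃.continuous.comp (continuous_snd.prodMk (continuous_projIcc.comp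
        (((continuous_const.mul continuous_fst).sub continuous_const).div_const d₃)))
    have hbd2 : ∀ z : ℝ × I, P * z.1 = d₁ + d₂ →
        G₂ (z.2, Set.projIcc 0 1 zero_le_one ((P * z.1 - d₁) / d₂)) =
        G₃ (z.2, Set.projIcc 0 1 zero_le_one ((P * z.1 - (d₁ + d₂)) / d₃)) := by
      intro z h
      rw [h, sub_self, zero_div, hproj0, add_sub_cancel_left]
      rw [show G₃ (z.2, 0) = x₃ from G₃.source z.2]
      rcases eq_or_lt_of_le h20 with h0 | h0
      · rw [← h0, zero_div, hproj0]
        rw [show G₂ (z.2, 0) = x₂ from G₂.source z.2]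
        exact hx23 h0.symm
      · rw [div_self h0.ne', hproj1]
        exact G₂.target z.2
    have hbd1 : ∀ z : ℝ × I, P * z.1 = d₁ →
        G₁ (z.2, Set.projIcc 0 1 zero_le_one ((P * z.1) / d₁)) =
        (if P * z.1 ≤ d₁ + d₂ then
          G₂ (z.2, Set.projIcc 0 1 zero_le_one ((P * z.1 - d₁) / d₂))
        else G₃ (z.2, Set.projIcc 0 1 zero_le_one ((P * z.1 - (d₁ + d₂)) / d₃))) := by
      intro z h
      rw [h, if_pos (by linarith : d₁ ≤ d₁ + d₂), sub_self, zero_div, hproj0]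
      rw [show G₂ (z.2, 0) = x₂ from G₂.source z.2]
      rcases eq_or_lt_of_le h10 with h0 | h0
      · rw [← h0, zero_div, hproj0]
        rw [show G₁ (z.2, 0) = x₁ from G₁.source z.2]
        exact hx12 h0.symm
      · rw [div_self h0.ne', hproj1]
        exact G₁.target z.2
    have hΦcont : Continuous (fun z : ℝ × I => Φ z.1 z.2) := by
      simp only [hΦ]
      apply Continuous.if_le hcont1 _ (continuous_const.mul continuous_fst)
        continuous_const hbd1
      exact Continuous.if_le hcont2 hcont3 (continuous_const.mul continuous_fst)
        continuous_const hbd2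
    -- values at the two ends of the circle parameter
    have hΦ0 : ∀ s : I, Φ (0:ℝ) s = x₁ := by
      intro s
      simp only [hΦ, mul_zero]
      rw [if_pos (by linarith : (0:ℝ) ≤ d₁), zero_div, hproj0]
      exact G₁.source s
    have hΦ1 : ∀ s : I, Φ (1:ℝ) s = x₁ := by
      intro s
      simp only [hΦ, mul_one]
      by_cases h1 : P ≤ d₁
      · have hd2 : d₂ = 0 := by rw [hP] at h1; linarith
        have hd3 : d₃ = 0 := by rw [hP] at h1; linarith
        have hPd : P = d₁ := by rw [hP, hd2, hd3]; ring
        rw [if_pos h1, hPd, div_self (by linarith : d₁ ≠ 0), hproj1]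
        rw [show G₁ (s, 1) = x₂ from G₁.target s]
        rw [hx23 hd2] at *
        exact (hx31 hd3)
      · rw [if_neg h1]
        by_cases h2 : P ≤ d₁ + d₂
        · have hd3 : d₃ = 0 := by rw [hP] at h2; linarith
          have hPd : P = d₁ + d₂ := by rw [hP, hd3]; ring
          have hd2pos : 0 < d₂ := by
            rcases eq_or_lt_of_le h20 with h0 | h0
            · exfalso; apply h1; rw [hPd, ← h0]; linarith
            · exact h0
          rw [if_pos h2, hPd, add_sub_cancel_left, div_self hd2pos.ne', hproj1]
          rw [show G₂ (s, 1) = x₃ from G₂.target s]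
          exact hx31 hd3
        · have hd3pos : 0 < d₃ := by
            rcases eq_or_lt_of_le h30 with h0 | h0
            · exfalso; apply h2; rw [hP, ← h0]; linarith
            · exact h0
          rw [if_neg h2]
          have hnum : P - (d₁ + d₂) = d₃ := by rw [hP]; ring
          rw [hnum, div_self hd3pos.ne', hproj1]
          exact G₃.target s
    -- values at the two ends of the homotopy parameter
    have hΦt0 : ∀ t ∈ Set.Icc (0:ℝ) 1, Φ t (0:I) = f₁ (P * t) := by
      intro t ht
      have htP0 : 0 ≤ P * t := mul_nonneg hP0 ht.1
      have htPP : P * t ≤ P := by nlinarith [ht.2]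
      have hPt : P * t ≤ d₁ + d₂ + d₃ := le_trans htPP (le_of_eq hP)
      simp only [hΦ]
      by_cases h1 : P * t ≤ d₁
      · rw [if_pos h1]
        rw [show G₁ ((0:I), Set.projIcc 0 1 zero_le_one ((P * t) / d₁)) =
          p₁ (Set.projIcc 0 1 zero_le_one ((P * t) / d₁)) from G₁.apply_zero _]
        rw [hp₁]
        rcases eq_or_lt_of_le h10 with h0 | h0
        · have : P * t = 0 := le_antisymm (by rw [← h0] at h1; exact h1) htP0
          rw [this, ← h0]
          simp
        · rw [hprojmem (div_nonneg htP0 h0.le) ((div_le_one h0).mpr h1),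
            mul_div_cancel₀ _ h0.ne', zero_add]
      · rw [if_neg h1]
        push_neg at h1
        by_cases h2 : P * t ≤ d₁ + d₂
        · have hd2pos : 0 < d₂ := by linarith
          rw [if_pos h2]
          rw [show G₂ ((0:I), Set.projIcc 0 1 zero_le_one ((P * t - d₁) / d₂)) =
            p₂ (Set.projIcc 0 1 zero_le_one ((P * t - d₁) / d₂)) from G₂.apply_zero _]
          rw [hp₂]
          rw [hprojmem (div_nonneg (by linarith) hd2pos.le)
            ((div_le_one hd2pos).mpr (by linarith)),
            mul_div_cancel₀ _ hd2pos.ne']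
          ring_nf
        · push_neg at h2
          have hd3pos : 0 < d₃ := by linarith
          rw [if_neg (not_le.mpr h2)]
          rw [show G₃ ((0:I), Set.projIcc 0 1 zero_le_one ((P * t - (d₁ + d₂)) / d₃)) =
            p₃ (Set.projIcc 0 1 zero_le_one ((P * t - (d₁ + d₂)) / d₃)) from G₃.apply_zero _]
          rw [hp₃]
          rw [hprojmem (div_nonneg (by linarith) hd3pos.le)
            ((div_le_one hd3pos).mpr (by linarith)),
            mul_div_cancel₀ _ hd3pos.ne']
          ring_nf
    have hΦt1 : ∀ t ∈ Set.Icc (0:ℝ) 1, Φ t (1:I) = f₂ (P * t) := by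
      intro t ht
      have htP0 : 0 ≤ P * t := mul_nonneg hP0 ht.1
      have htPP : P * t ≤ P := by nlinarith [ht.2]
      have hPt : P * t ≤ d₁ + d₂ + d₃ := le_trans htPP (le_of_eq hP)
      simp only [hΦ]
      by_cases h1 : P * t ≤ d₁
      · rw [if_pos h1]
        rw [show G₁ ((1:I), Set.projIcc 0 1 zero_le_one ((P * t) / d₁)) =
          q₁ (Set.projIcc 0 1 zero_le_one ((P * t) / d₁)) from G₁.apply_one _]
        rw [hq₁]
        rcases eq_or_lt_of_le h10 with h0 | h0
        · have : P * t = 0 := le_antisymm (by rw [← h0] at h1; exact h1) htP0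
          rw [this, ← h0]
          simp
        · rw [hprojmem (div_nonneg htP0 h0.le) ((div_le_one h0).mpr h1),
            mul_div_cancel₀ _ h0.ne', zero_add]
      · rw [if_neg h1]
        push_neg at h1
        by_cases h2 : P * t ≤ d₁ + d₂
        · have hd2pos : 0 < d₂ := by linarith
          rw [if_pos h2]
          rw [show G₂ ((1:I), Set.projIcc 0 1 zero_le_one ((P * t - d₁) / d₂)) =
            q₂ (Set.projIcc 0 1 zero_le_one ((P * t - d₁) / d₂)) from G₂.apply_one _]
          rw [hq₂]
          rw [hprojmem (div_nonneg (by linarith) hd2pos.le)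
            ((div_le_one hd2pos).mpr (by linarith)),
            mul_div_cancel₀ _ hd2pos.ne']
          ring_nf
        · push_neg at h2
          have hd3pos : 0 < d₃ := by linarith
          rw [if_neg (not_le.mpr h2)]
          rw [show G₃ ((1:I), Set.projIcc 0 1 zero_le_one ((P * t - (d₁ + d₂)) / d₃)) =
            q₃ (Set.projIcc 0 1 zero_le_one ((P * t - (d₁ + d₂)) / d₃)) from G₃.apply_one _]
          rw [hq₃]
          rw [hprojmem (div_nonneg (by linarith) hd3pos.le)
            ((div_le_one hd3pos).mpr (by linarith)),
            mul_div_cancel₀ _ hd3pos.ne']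
          ring_nf
    -- assemble the homotopy on the circle
    let Qc : C(ℝ × I, X) := ⟨fun z => Φ z.1 z.2, hΦcont⟩
    let Qcur : C(ℝ, C(I, X)) := Qc.curry
    have hbd : Qcur 0 = Qcur 1 := by
      ext s
      show Φ (0:ℝ) s = Φ (1:ℝ) s
      rw [hΦ0 s, hΦ1 s]
    have hg : Continuous (AddCircle.liftIco 1 0 ⇑Qcur) :=
      AddCircle.liftIco_zero_continuous hbd Qcur.continuous.continuousOn
    let gC : C(AddCircle (1:ℝ), C(I, X)) := ⟨AddCircle.liftIco 1 0 ⇑Qcur, hg⟩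
    have huncurry : Continuous (fun sz : I × AddCircle (1:ℝ) => gC sz.2 sz.1) :=
      (gC.continuous_uncurry_of_continuous).comp
        (continuous_snd.prodMk continuous_fst)
    refine ⟨{ toFun := fun sz => gC sz.2 sz.1
              continuous_toFun := huncurry
              map_zero_left := ?_
              map_one_left := ?_ }, Set.subset_univ _⟩
    · intro z
      obtain ⟨t, ht, rfl⟩ := addCircle_exists_rep z
      show (AddCircle.liftIco 1 0 ⇑Qcur ((t:ℝ) : AddCircle (1:ℝ))) 0 = L₁ ((t:ℝ) : AddCircle (1:ℝ))
      have hgt : AddCircle.liftIco 1 0 ⇑Qcur ((t:ℝ) : AddCircle (1:ℝ)) = Qcur t :=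
        AddCircle.liftIco_coe_apply (show t ∈ Set.Ico (0:ℝ) (0+1) by simpa using ht)
      rw [hgt, hL₁ t ⟨ht.1, ht.2.le⟩]
      exact hΦt0 t ⟨ht.1, ht.2.le⟩
    · intro z
      obtain ⟨t, ht, rfl⟩ := addCircle_exists_rep z
      show (AddCircle.liftIco 1 0 ⇑Qcur ((t:ℝ) : AddCircle (1:ℝ))) 1 = L₂ ((t:ℝ) : AddCircle (1:ℝ))
      have hgt : AddCircle.liftIco 1 0 ⇑Qcur ((t:ℝ) : AddCircle (1:ℝ)) = Qcur t :=
        AddCircle.liftIco_coe_apply (show t ∈ Set.Ico (0:ℝ) (0+1) by simpa using ht)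
      rw [hgt, hL₂ t ⟨ht.1, ht.2.le⟩]
      exact hΦt1 t ⟨ht.1, ht.2.le⟩

end Aux6

section Final

universe u
variable {X : Type u} [MetricSpace X]

lemma FreelyHomotopic.symm' {β γ : MLoop X} (h : FreelyHomotopic β γ) :
    FreelyHomotopic γ β := by
  obtain ⟨H, -⟩ := h
  exact ⟨H.symm, Set.subset_univ _⟩

lemma FreelyHomotopic.trans' {β γ δ : MLoop X} (h1 : FreelyHomotopic β γ)
    (h2 : FreelyHomotopic γ δ) : FreelyHomotopic β δ := by
  obtain ⟨H1, -⟩ := h1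
  obtain ⟨H2, -⟩ := h2
  exact ⟨H1.trans H2, Set.subset_univ _⟩

end Final

section Statement

variable {X : Type*} [MetricSpace X]

/-- Remark 3.2, well-definedness of the winding number. -/
theorem stmt4
    (hgeo : GeodesicSpace X) (hloc : LocallyCompactSpace X)
    (hslsc : SemiLocallySimplyConnected X)
    (α : MLoop X) (c : ℝ) (hα : IsGeodesicCircle α c) (hbot : IsBottleneckLoop α)
    (N : Set X) (hNcomp : IsCompact N) (hNconv : GeodesicallyConvex N)
    (hNnbhd : Set.range ⇑α ⊆ interior N)
    (hnc : ¬ NullHomotopicIn Set.univ α)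
    (hshort : ∀ β : MLoop X, Set.range ⇑β ⊆ N → loopLength β < ENNReal.ofReal c →
      NullHomotopicIn Set.univ β)
    (hwind : ∀ β : MLoop X, Set.range ⇑β ⊆ N → ∃ k : ℤ, FreelyHomotopic β (loopPow α k))
    (x₁ x₂ x₃ : X) (h₁ : x₁ ∈ N) (h₂ : x₂ ∈ N) (h₃ : x₃ ∈ N)
    (hdiam : tripleDiam x₁ x₂ x₃ < c / 2) :
    (∀ L₁ L₂ : MLoop X, IsFilling x₁ x₂ x₃ L₁ → Set.range ⇑L₁ ⊆ N →
      IsFilling x₁ x₂ x₃ L₂ → Set.range ⇑L₂ ⊆ N → FreelyHomotopic L₁ L₂) ∧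
    (∀ L₁ L₂ : MLoop X, IsFilling x₁ x₂ x₃ L₁ → Set.range ⇑L₁ ⊆ N →
      IsFilling x₁ x₂ x₃ L₂ → Set.range ⇑L₂ ⊆ N →
      ∀ k : ℤ, FreelyHomotopic L₁ (loopPow α k) → FreelyHomotopic L₂ (loopPow α k)) := by
  have main : ∀ L₁ L₂ : MLoop X, IsFilling x₁ x₂ x₃ L₁ → Set.range ⇑L₁ ⊆ N →
      IsFilling x₁ x₂ x₃ L₂ → Set.range ⇑L₂ ⊆ N → FreelyHomotopic L₁ L₂ :=
    fun L₁ L₂ hF1 hN1 hF2 hN2 =>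
      key_lemma hα.1 N hshort x₁ x₂ x₃ hdiam L₁ L₂ hF1 hN1 hF2 hN2
  refine ⟨main, ?_⟩
  intro L₁ L₂ hF1 hN1 hF2 hN2 k hk
  exact (main L₁ L₂ hF1 hN1 hF2 hN2).symm'.trans' hk

end Statement

end
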